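/- Let f₁,…,f_s ∈ L²([0,1]) be an orthonormal family of step functions, and let e₁,…,e_m ∈ L²([0,1]) be an orthonormal family with each e_j orthogonal to every f_i, such that no nonzero linear combination of e₁,…,e_m is (almost everywhere equal to) a step function. Then for every k ≥ 2 there exists a constant c > 0 such that for all (t₁,…,t_k) ∈ Δ_k, G(𝟙_{[t₁,t₂]}, …, 𝟙_{[t_{k−1},t_k]}, f₁, …, f_s, e₁, …, e_m) ≥ c · G(𝟙_{[t₁,t₂]}, …, 𝟙_{[t_{k−1},t_k]}, f₁, …, f_s). -/

import Mathlib

open MeasureTheory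

noncomputable def μ01 : Measure ℝ := volume.restrict (Set.Icc 0 1)

noncomputable abbrev L2 : Type := Lp ℝ 2 μ01

lemma μ01_Icc_ne_top (a b : ℝ) : μ01 (Set.Icc a b) ≠ ⊤ :=
  ((Measure.restrict_apply_le _ _).trans_lt measure_Icc_lt_top).ne

/-- The element of `L²([0,1])` given by the indicator of `[a,b]`. -/
noncomputable def ind (a b : ℝ) : L2 :=
  indicatorConstLp 2 measurableSet_Icc (μ01_Icc_ne_top a b) (1 : ℝ)

/-- Gram determinant of a finite family of vectors. -/
noncomputable def gram {H : Type*} [NormedAddCommGroup H] [InnerProductSpace ℝ H]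
    {n : ℕ} (v : Fin n → H) : ℝ :=
  (Matrix.of fun i j => (inner ℝ (v i) (v j) : ℝ)).det

/-- An element of `L²([0,1])` is a step function if it is a.e. equal to a finite linear
combination of indicator functions of intervals. -/
def IsStepFun (g : L2) : Prop :=
  ∃ (n : ℕ) (c a b : Fin n → ℝ),
    ⇑g =ᵐ[μ01] fun x => ∑ i, Set.indicator (Set.Icc (a i) (b i)) (fun _ => c i) x

open Filter Set Matrix Topology

section GramAlgebra
variable {H : Type*} [NormedAddCommGroup H] [InnerProductSpace ℝ H]

/-- Gram matrix over an arbitrary finite index type. -/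
noncomputable def gramM {ι : Type*} [Fintype ι] (v : ι → H) : Matrix ι ι ℝ :=
  Matrix.of fun i j => (inner ℝ (v i) (v j) : ℝ)

noncomputable def gram' {ι : Type*} [Fintype ι] [DecidableEq ι] (v : ι → H) : ℝ :=
  (gramM v).det

lemma gram_eq_gram' {n : ℕ} (v : Fin n → H) : gram v = gram' v := rfl

lemma gramM_quadform {ι : Type*} [Fintype ι] (v : ι → H) (γ : ι → ℝ) :
    γ ⬝ᵥ (gramM v).mulVec γ = ‖∑ i, γ i • v i‖ ^ 2 := by
  rw [← real_inner_self_eq_norm_sq, sum_inner]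
  simp only [real_inner_smul_left, inner_sum, real_inner_smul_right]
  simp only [dotProduct, Matrix.mulVec, dotProduct, gramM, Matrix.of_apply,
    Finset.mul_sum]
  congr 1; ext i; congr 1; ext j; ring

lemma gramM_posSemidef {ι : Type*} [Fintype ι] (v : ι → H) : (gramM v).PosSemidef := by
  rw [Matrix.posSemidef_iff_dotProduct_mulVec]; constructor
  · ext i j
    simp [gramM, Matrix.conjTranspose, real_inner_comm (v i) (v j)]
  · intro γ
    have h := gramM_quadform v γ
    have hs : star γ = γ := by ext i; simp
    rw [hs, h]
    positivity

lemma gram'_nonneg {ι : Type*} [Fintype ι] [DecidableEq ι] (v : ι → H) : 0 ≤ gram' v := by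
  have h := gramM_posSemidef v
  rw [gram', h.1.det_eq_prod_eigenvalues]
  exact Finset.prod_nonneg fun i _ => h.eigenvalues_nonneg i

lemma gram_nonneg {n : ℕ} (v : Fin n → H) : 0 ≤ gram v := gram'_nonneg v

lemma gram'_reindex {ι κ : Type*} [Fintype ι] [DecidableEq ι] [Fintype κ] [DecidableEq κ]
    (σ : κ ≃ ι) (v : ι → H) : gram' (v ∘ σ) = gram' v := by
  have h : gramM (v ∘ σ) = (gramM v).submatrix σ σ := rfl
  rw [gram', h, Matrix.det_submatrix_equiv_self σ, gram']

lemma gramM_transform {ι : Type*} [Fintype ι] (U : Matrix ι ι ℝ) (v : ι → H) :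
    gramM (fun p => ∑ q, U p q • v q) = U * gramM v * U.transpose := by
  ext i j
  show (inner ℝ (∑ q, U i q • v q) (∑ q', U j q' • v q') : ℝ) = _
  rw [inner_sum]
  simp_rw [real_inner_smul_right, sum_inner, real_inner_smul_left]
  simp only [Matrix.mul_apply, Matrix.transpose_apply, gramM, Matrix.of_apply]
  refine Finset.sum_congr rfl fun q' _ => ?_
  rw [Finset.sum_mul, Finset.mul_sum]
  refine Finset.sum_congr rfl fun q _ => ?_
  ring

lemma gram'_transform {ι : Type*} [Fintype ι] [DecidableEq ι] (U : Matrix ι ι ℝ) (v : ι → H) :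
    gram' (fun p => ∑ q, U p q • v q) = U.det ^ 2 * gram' v := by
  unfold gram'
  rw [gramM_transform, Matrix.det_mul, Matrix.det_mul, Matrix.det_transpose]; ring

lemma gram'_eq_zero_of_dep {ι : Type*} [Fintype ι] [DecidableEq ι] (v : ι → H)
    (γ : ι → ℝ) (hγ : γ ≠ 0) (h : ∑ i, γ i • v i = 0) : gram' v = 0 := by
  rw [gram', ← Matrix.exists_mulVec_eq_zero_iff]
  refine ⟨γ, hγ, ?_⟩
  ext i
  simp only [Matrix.mulVec, dotProduct, gramM, Matrix.of_apply, Pi.zero_apply]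
  calc ∑ j, (inner ℝ (v i) (v j) : ℝ) * γ j = inner ℝ (v i) (∑ j, γ j • v j) := by
        rw [inner_sum]; congr 1; ext j; rw [real_inner_smul_right]; ring
    _ = 0 := by rw [h, inner_zero_right]

end GramAlgebra

section Fact
variable {H : Type*} [NormedAddCommGroup H] [InnerProductSpace ℝ H] [CompleteSpace H]

lemma gram'_block {ι κ : Type*} [Fintype ι] [DecidableEq ι] [Fintype κ] [DecidableEq κ]
    (x : ι → H) (z : κ → H) (h : ∀ i j, (inner ℝ (x i) (z j) : ℝ) = 0) :
    gram' (Sum.elim x z) = gram' x * gram' z := by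
  have hM : gramM (Sum.elim x z) = Matrix.fromBlocks (gramM x) 0 0 (gramM z) := by
    ext p q
    cases p with
    | inl i => cases q with
      | inl i' => rfl
      | inr j => simpa [gramM, Matrix.fromBlocks] using h i j
    | inr j => cases q with
      | inl i => simp only [gramM, Matrix.of_apply, Sum.elim_inl, Sum.elim_inr,
          Matrix.fromBlocks_apply₂₁, Matrix.zero_apply]
                 rw [real_inner_comm]; exact h i j
      | inr j' => rfl
  rw [gram', hM, Matrix.det_fromBlocks_zero₁₂]; rfl

lemma gram'_sub_combo {ι κ : Type*} [Fintype ι] [DecidableEq ι] [Fintype κ] [DecidableEq κ]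
    (x : ι → H) (y : κ → H) (C : κ → ι → ℝ) :
    gram' (Sum.elim x (fun j => y j - ∑ i, C j i • x i)) = gram' (Sum.elim x y) := by
  set U : Matrix (ι ⊕ κ) (ι ⊕ κ) ℝ :=
    Matrix.fromBlocks 1 0 (Matrix.of fun j i => -(C j i)) 1 with hUdef
  have hU : (fun p => ∑ q, U p q • (Sum.elim x y) q)
      = Sum.elim x (fun j => y j - ∑ i, C j i • x i) := by
    funext p
    cases p with
    | inl i =>
      rw [Fintype.sum_sum_type]
      simp [hUdef, Matrix.one_apply, ite_smul, Finset.sum_ite_eq, Finset.mem_univ]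
    | inr j =>
      rw [Fintype.sum_sum_type]
      simp only [hUdef, Matrix.fromBlocks_apply₂₁, Matrix.fromBlocks_apply₂₂, Matrix.of_apply,
        Matrix.one_apply, Sum.elim_inl, Sum.elim_inr, ite_smul, one_smul, zero_smul, neg_smul,
        Finset.sum_ite_eq, Finset.mem_univ, if_true, Finset.sum_neg_distrib]
      abel
  have h2 := gram'_transform U (Sum.elim x y)
  rw [hU] at h2
  have hdet : U.det = 1 := by
    rw [hUdef, Matrix.det_fromBlocks_zero₁₂, Matrix.det_one, Matrix.det_one, mul_one]
  rw [h2, hdet]; ring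

lemma gram'_factor {ι κ : Type*} [Fintype ι] [DecidableEq ι] [Fintype κ] [DecidableEq κ]
    (x : ι → H) (e : κ → H) :
    ∀ [inst : Submodule.HasOrthogonalProjection (Submodule.span ℝ (Set.range x))],
    gram' (Sum.elim x e) = gram' x *
      gram' (fun j => e j -
        (Submodule.orthogonalProjection (Submodule.span ℝ (Set.range x)) (e j) : H)) := by
  intro inst
  set K := Submodule.span ℝ (Set.range x) with hK
  haveI : FiniteDimensional ℝ K := FiniteDimensional.span_of_finite ℝ (Set.finite_range x)
  haveI : CompleteSpace K := FiniteDimensional.complete ℝ K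
  haveI : Submodule.HasOrthogonalProjection K := Submodule.HasOrthogonalProjection.ofCompleteSpace K
  choose C hC using fun j =>
    (Submodule.mem_span_range_iff_exists_fun ℝ).mp (Submodule.orthogonalProjection K (e j)).2
  have h1 := gram'_sub_combo x e C
  rw [show (fun j => e j - ∑ i, C j i • x i)
      = (fun j => e j - (Submodule.orthogonalProjection K (e j) : H)) from
    funext fun j => by rw [hC j]] at h1
  rw [← h1, gram'_block]
  intro i j
  have hx : x i ∈ K := Submodule.subset_span ⟨i, rfl⟩
  rw [real_inner_comm]
  exact (by have := Submodule.starProjection_inner_eq_zero (e j) (x i) hx; exact this)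

lemma norm_sub_orthProj_le {K : Submodule ℝ H} [Submodule.HasOrthogonalProjection K] (v : H) :
    ‖v - (Submodule.orthogonalProjection K v : H)‖ ≤ ‖v‖ := by
  set p : H := (Submodule.orthogonalProjection K v : H)
  have horth : (inner ℝ (v - p) p : ℝ) = 0 :=
    (by have := Submodule.starProjection_inner_eq_zero v p (Submodule.orthogonalProjection K v).2; exact this)
  have hsq : ‖v‖ ^ 2 = ‖v - p‖ ^ 2 + ‖p‖ ^ 2 := by
    have h := norm_add_sq_real (v - p) p
    rw [sub_add_cancel] at h
    rw [h, horth]; ring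
  nlinarith [norm_nonneg (v - p), norm_nonneg v, norm_nonneg p]

end Fact

section StepFun

/-- `g` is a.e. equal to a step function with at most `N` intervals. -/
def StepAt (g : L2) (N : ℕ) : Prop :=
  ∃ (c a b : Fin N → ℝ),
    ⇑g =ᵐ[μ01] fun x => ∑ i, Set.indicator (Set.Icc (a i) (b i)) (fun _ => c i) x

lemma isStepFun_of_stepAt {g : L2} {N : ℕ} (h : StepAt g N) : IsStepFun g :=
  ⟨N, h⟩

lemma stepAt_of_isStepFun {g : L2} (h : IsStepFun g) : ∃ N, StepAt g N := h

lemma StepAt.add {g₁ g₂ : L2} {N₁ N₂ : ℕ} (h₁ : StepAt g₁ N₁) (h₂ : StepAt g₂ N₂) :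
    StepAt (g₁ + g₂) (N₁ + N₂) := by
  obtain ⟨c₁, a₁, b₁, he₁⟩ := h₁
  obtain ⟨c₂, a₂, b₂, he₂⟩ := h₂
  refine ⟨Fin.append c₁ c₂, Fin.append a₁ a₂, Fin.append b₁ b₂, ?_⟩
  filter_upwards [Lp.coeFn_add g₁ g₂, he₁, he₂] with x hx hx₁ hx₂
  rw [hx, Pi.add_apply, hx₁, hx₂, Fin.sum_univ_add]
  congr 1 <;> [skip; skip] <;>
    exact Finset.sum_congr rfl fun i _ => by
      simp [Fin.append_left, Fin.append_right]

lemma StepAt.smul {g : L2} {N : ℕ} (r : ℝ) (h : StepAt g N) : StepAt (r • g) N := by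
  obtain ⟨c, a, b, he⟩ := h
  refine ⟨fun i => r * c i, a, b, ?_⟩
  filter_upwards [Lp.coeFn_smul r g, he] with x hx hx₁
  rw [hx, Pi.smul_apply, hx₁]
  rw [smul_eq_mul, Finset.mul_sum]
  refine Finset.sum_congr rfl fun i _ => ?_
  by_cases hm : x ∈ Set.Icc (a i) (b i) <;> simp [Set.indicator, hm]

lemma StepAt.zero (N : ℕ) : StepAt (0 : L2) N := by
  refine ⟨fun _ => 0, fun _ => 0, fun _ => 0, ?_⟩
  filter_upwards [Lp.coeFn_zero ℝ 2 μ01] with x hx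
  simpa using hx

lemma StepAt.mono {g : L2} {N N' : ℕ} (h : StepAt g N) (hN : N ≤ N') : StepAt g N' := by
  obtain ⟨d, rfl⟩ := Nat.le.dest hN
  have := h.add (StepAt.zero d)
  rwa [add_zero] at this

lemma stepAt_ind (a b : ℝ) : StepAt (ind a b) 1 := by
  refine ⟨fun _ => 1, fun _ => a, fun _ => b, ?_⟩
  filter_upwards [indicatorConstLp_coeFn (μ := μ01) (p := 2)
    (hs := measurableSet_Icc) (hμs := μ01_Icc_ne_top a b) (c := (1:ℝ))] with x hx
  rw [ind, hx]
  simp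

lemma stepAt_sum {r : ℕ} (y : Fin r → L2) (M : ℕ) (hy : ∀ i, StepAt (y i) M)
    (d : Fin r → ℝ) : StepAt (∑ i, d i • y i) (r * M) := by
  induction r with
  | zero => simpa using StepAt.zero 0
  | succ r ih =>
    rw [Fin.sum_univ_succ]
    have h1 : StepAt (d 0 • y 0) M := (hy 0).smul (d 0)
    have h2 : StepAt (∑ i : Fin r, d i.succ • y i.succ) (r * M) :=
      ih (fun i => y i.succ) (fun i => hy i.succ) (fun i => d i.succ)
    have := h1.add h2
    rwa [show M + r * M = (r + 1) * M by ring] at this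

lemma stepAt_of_mem_span {r : ℕ} (y : Fin r → L2) (M : ℕ) (hy : ∀ i, StepAt (y i) M)
    {w : L2} (hw : w ∈ Submodule.span ℝ (Set.range y)) : StepAt w (r * M) := by
  obtain ⟨d, rfl⟩ := (Submodule.mem_span_range_iff_exists_fun ℝ).mp hw
  exact stepAt_sum y M hy d

end StepFun

lemma StepAt.clamped {g : L2} {N : ℕ} (h : StepAt g N) :
    ∃ c a b : Fin N → ℝ, (∀ i, a i ∈ Set.Icc (0:ℝ) 1) ∧ (∀ i, b i ∈ Set.Icc (0:ℝ) 1) ∧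
      ⇑g =ᵐ[μ01] fun x => ∑ i, Set.indicator (Set.Icc (a i) (b i)) (fun _ => c i) x := by
  classical
  obtain ⟨c, a, b, he⟩ := h
  refine ⟨fun i => if a i ≤ 1 ∧ 0 ≤ b i then c i else 0,
          fun i => if a i ≤ 1 ∧ 0 ≤ b i then max (a i) 0 else 0,
          fun i => if a i ≤ 1 ∧ 0 ≤ b i then min (b i) 1 else 0, ?_, ?_, ?_⟩
  · intro i; by_cases hi : a i ≤ 1 ∧ 0 ≤ b i <;>
      simp [hi, Set.mem_Icc, le_max_iff, max_le_iff, hi]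
  · intro i; by_cases hi : a i ≤ 1 ∧ 0 ≤ b i <;>
      simp [hi, Set.mem_Icc, le_min_iff, min_le_iff, hi]
  · have hx01 : ∀ᵐ x ∂μ01, x ∈ Set.Icc (0:ℝ) 1 := ae_restrict_mem measurableSet_Icc
    filter_upwards [he, hx01] with x hx hx01
    rw [hx]
    refine Finset.sum_congr rfl fun i _ => ?_
    by_cases hi : a i ≤ 1 ∧ 0 ≤ b i
    · simp only [if_pos hi]
      rw [Set.indicator_apply, Set.indicator_apply]
      refine if_congr ?_ rfl rfl
      simp only [Set.mem_Icc] at hx01 ⊢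
      constructor
      · rintro ⟨h1, h2⟩; exact ⟨max_le h1 hx01.1, le_min h2 hx01.2⟩
      · rintro ⟨h1, h2⟩
        exact ⟨le_trans (le_max_left _ _) h1, le_trans h2 (min_le_left _ _)⟩
    · simp only [if_neg hi]
      have hnm : x ∉ Set.Icc (a i) (b i) := by
        rw [not_and_or] at hi
        simp only [Set.mem_Icc, not_and_or, not_le] at hi ⊢
        rcases hi with h1 | h2
        · left; linarith [hx01.2]
        · right; linarith [hx01.1]
      rw [Set.indicator_of_notMem hnm]
      simp

set_option maxHeartbeats 2000000 in
lemma isStepFun_of_tendsto (N : ℕ) (h : ℕ → L2) (g : L2) (hs : ∀ n, StepAt (h n) N)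
    (hg : Filter.Tendsto h atTop (𝓝 g)) : IsStepFun g := by
  classical
  choose c a b ha hb hae using fun n => (hs n).clamped
  have hmeas : TendstoInMeasure μ01 (fun n => ⇑(h n)) atTop ⇑g :=
    tendstoInMeasure_of_tendsto_Lp hg
  obtain ⟨ns, hns_mono, hns_ae⟩ := hmeas.exists_seq_tendsto_ae
  -- compactness of endpoints
  set P : ℕ → (Fin N → ℝ) × (Fin N → ℝ) := fun i => (a (ns i), b (ns i)) with hP
  have hPmem : ∀ i, P i ∈ Set.Icc ((fun _ => 0, fun _ => 0) : (Fin N → ℝ) × (Fin N → ℝ))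
      (fun _ => 1, fun _ => 1) := by
    intro i
    constructor <;> constructor <;> intro j
    · exact (ha (ns i) j).1
    · exact (hb (ns i) j).1
    · exact (ha (ns i) j).2
    · exact (hb (ns i) j).2
  obtain ⟨q, hq_mem, φ, hφ_mono, hφ_tendsto⟩ := (isCompact_Icc).tendsto_subseq hPmem
  -- limit endpoints
  have hA : ∀ j, Filter.Tendsto (fun i => a (ns (φ i)) j) atTop (𝓝 (q.1 j)) := by
    intro j
    exact (((continuous_apply j).comp continuous_fst).tendsto q).comp hφ_tendsto
  have hB : ∀ j, Filter.Tendsto (fun i => b (ns (φ i)) j) atTop (𝓝 (q.2 j)) := by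
    intro j
    exact (((continuous_apply j).comp continuous_snd).tendsto q).comp hφ_tendsto
  set B : Finset ℝ :=
    (Finset.image q.1 Finset.univ ∪ Finset.image q.2 Finset.univ) ∪ {0, 1} with hBdef
  have h0B : (0:ℝ) ∈ B := by simp [hBdef]
  have h1B : (1:ℝ) ∈ B := by simp [hBdef]
  have hq1B : ∀ j, q.1 j ∈ B := fun j => by
    simp [hBdef]
  have hq2B : ∀ j, q.2 j ∈ B := fun j => by
    simp [hBdef]
  set F : ℕ → ℝ → ℝ := fun i x =>
    ∑ j, Set.indicator (Set.Icc (a (ns (φ i)) j) (b (ns (φ i)) j))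
      (fun _ => c (ns (φ i)) j) x with hF
  -- the good set
  set S : Set ℝ := {x | x ∈ Set.Ioo (0:ℝ) 1 ∧ x ∉ (B : Set ℝ) ∧
    Filter.Tendsto (fun i => F i x) atTop (𝓝 (⇑g x))} with hSdef
  have hS : ∀ᵐ x ∂μ01, x ∈ S := by
    have h1 : ∀ᵐ x ∂μ01, x ∈ Set.Icc (0:ℝ) 1 := ae_restrict_mem measurableSet_Icc
    have h2 : ∀ᵐ x ∂μ01, x ∉ (B : Set ℝ) := by
      have hv : volume (B : Set ℝ) = 0 := (B.finite_toSet.countable).measure_zero _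
      have : μ01 (B : Set ℝ) = 0 :=
        le_antisymm ((Measure.restrict_apply_le _ _).trans hv.le) zero_le
      exact measure_eq_zero_iff_ae_notMem.mp this
    have h3 : ∀ᵐ x ∂μ01, ∀ i : ℕ, ⇑(h (ns (φ i))) x = F i x := by
      rw [MeasureTheory.ae_all_iff]
      intro i
      exact hae (ns (φ i))
    filter_upwards [h1, h2, h3, hns_ae] with x hx1 hx2 hx3 hx4
    have hIoo : x ∈ Set.Ioo (0:ℝ) 1 := by
      rcases hx1 with ⟨hl, hr⟩
      constructor
      · rcases hl.lt_or_eq with h | h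
        · exact h
        · exact absurd (h ▸ h0B) (by simpa [h.symm] using hx2)
      · rcases hr.lt_or_eq with h | h
        · exact h
        · exact absurd h1B (by simpa [h] using hx2)
    refine ⟨hIoo, hx2, ?_⟩
    have : Filter.Tendsto (fun i => ⇑(h (ns (φ i))) x) atTop (𝓝 (⇑g x)) :=
      hx4.comp hφ_mono.tendsto_atTop
    exact this.congr (fun i => hx3 i)
  -- key: constancy on gaps
  have key : ∀ p r : ℝ, p ∈ B → r ∈ B → p < r → (∀ β ∈ B, β ∉ Set.Ioo p r) →
      ∀ x ∈ S ∩ Set.Ioo p r, ∀ y ∈ S ∩ Set.Ioo p r, ⇑g x = ⇑g y := by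
    intro p r hp hr hlt hgap x hx y hy
    obtain ⟨hxS, hxI⟩ := hx
    obtain ⟨hyS, hyI⟩ := hy
    have hFxy : ∀ᶠ i in atTop, F i x = F i y := by
      have hall : ∀ j : Fin N, ∀ᶠ i in atTop,
          ((a (ns (φ i)) j ≤ x ↔ a (ns (φ i)) j ≤ y) ∧
           (x ≤ b (ns (φ i)) j ↔ y ≤ b (ns (φ i)) j)) := by
        intro j
        have hga := hgap (q.1 j) (hq1B j)
        have hgb := hgap (q.2 j) (hq2B j)
        have ha' : ∀ᶠ i in atTop, (a (ns (φ i)) j ≤ x ↔ a (ns (φ i)) j ≤ y) := by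
          by_cases hc : q.1 j ≤ p
          · have h1 : q.1 j < min x y := lt_min (hc.trans_lt hxI.1) (hc.trans_lt hyI.1)
            filter_upwards [(hA j).eventually_lt_const h1] with i hi
            have := lt_min_iff.mp hi
            exact iff_of_true this.1.le this.2.le
          · have hc2 : r ≤ q.1 j := by
              by_contra hcon
              push_neg at hcon hc
              exact hga ⟨hc, hcon⟩
            have h1 : max x y < q.1 j := (max_lt hxI.2 hyI.2).trans_le hc2
            filter_upwards [(hA j).eventually_const_lt h1] with i hi
            have := max_lt_iff.mp hi
            exact iff_of_false (not_le.mpr this.1) (not_le.mpr this.2)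
        have hb' : ∀ᶠ i in atTop, (x ≤ b (ns (φ i)) j ↔ y ≤ b (ns (φ i)) j) := by
          by_cases hc : q.2 j ≤ p
          · have h1 : q.2 j < min x y := lt_min (hc.trans_lt hxI.1) (hc.trans_lt hyI.1)
            filter_upwards [(hB j).eventually_lt_const h1] with i hi
            have := lt_min_iff.mp hi
            exact iff_of_false (not_le.mpr this.1) (not_le.mpr this.2)
          · have hc2 : r ≤ q.2 j := by
              by_contra hcon
              push_neg at hcon hc
              exact hgb ⟨hc, hcon⟩
            have h1 : max x y < q.2 j := (max_lt hxI.2 hyI.2).trans_le hc2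
            filter_upwards [(hB j).eventually_const_lt h1] with i hi
            have := max_lt_iff.mp hi
            exact iff_of_true this.1.le this.2.le
        exact ha'.and hb'
      have hall2 : ∀ᶠ i in atTop, ∀ j : Fin N,
          ((a (ns (φ i)) j ≤ x ↔ a (ns (φ i)) j ≤ y) ∧
           (x ≤ b (ns (φ i)) j ↔ y ≤ b (ns (φ i)) j)) := Filter.eventually_all.mpr hall
      filter_upwards [hall2] with i hi
      simp only [hF]
      refine Finset.sum_congr rfl fun j _ => ?_
      rw [Set.indicator_apply, Set.indicator_apply]
      exact if_congr (by rw [Set.mem_Icc, Set.mem_Icc]; exact and_congr (hi j).1 (hi j).2) rfl rfl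
    have h1 : Filter.Tendsto (fun i => F i x) atTop (𝓝 (⇑g y)) :=
      (hyS.2.2).congr' (hFxy.mono fun i hi => hi.symm)
    exact tendsto_nhds_unique hxS.2.2 h1
  -- choose values on gaps
  set val : ℝ × ℝ → ℝ := fun pr =>
    if hne : (S ∩ Set.Ioo pr.1 pr.2).Nonempty then ⇑g hne.some else 0 with hval
  set gap : ℝ × ℝ → Prop := fun pr => pr.1 < pr.2 ∧ ∀ β ∈ B, β ∉ Set.Ioo pr.1 pr.2 with hgapdef
  set s2 := B ×ˢ B with hs2
  set n := s2.card with hn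
  set ε := s2.equivFin with hε
  refine ⟨n, fun i => if gap ((ε.symm i : ℝ × ℝ)) then val (ε.symm i : ℝ × ℝ) else 0,
         fun i => (ε.symm i : ℝ × ℝ).1, fun i => (ε.symm i : ℝ × ℝ).2, ?_⟩
  filter_upwards [hS] with x hxS
  obtain ⟨hxIoo, hxB, hxconv⟩ := hxS
  -- the gap containing x
  have hBlne : (B.filter (· < x)).Nonempty := ⟨0, Finset.mem_filter.mpr ⟨h0B, hxIoo.1⟩⟩
  have hBrne : (B.filter (x < ·)).Nonempty := ⟨1, Finset.mem_filter.mpr ⟨h1B, hxIoo.2⟩⟩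
  set p := (B.filter (· < x)).max' hBlne with hp
  set r := (B.filter (x < ·)).min' hBrne with hr
  have hpB : p ∈ B ∧ p < x := by
    rw [hp]; exact Finset.mem_filter.mp (Finset.max'_mem _ hBlne)
  have hrB : r ∈ B ∧ x < r := by
    rw [hr]; exact Finset.mem_filter.mp (Finset.min'_mem _ hBrne)
  have hgappr : gap (p, r) := by
    refine ⟨hpB.2.trans hrB.2, ?_⟩
    intro β hβ hmem
    rcases lt_trichotomy β x with hlt | heq | hgt
    · have hmemf : β ∈ B.filter (· < x) := Finset.mem_filter.mpr ⟨hβ, hlt⟩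
      have hβp : β ≤ p := by rw [hp]; exact Finset.le_max' _ β hmemf
      exact absurd hβp (not_le.mpr hmem.1)
    · exact hxB (heq ▸ hβ)
    · have hmemf : β ∈ B.filter (x < ·) := Finset.mem_filter.mpr ⟨hβ, hgt⟩
      have hβr : r ≤ β := by rw [hr]; exact Finset.min'_le _ β hmemf
      exact absurd hβr (not_le.mpr hmem.2)
  have huniq : ∀ z : ℝ × ℝ, z ∈ s2 → gap z → x ∈ Set.Ioo z.1 z.2 → z = (p, r) := by
    intro z hz hgz hxz
    have hz' : z.1 ∈ B ∧ z.2 ∈ B := by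
      rw [hs2] at hz; exact Finset.mem_product.mp hz
    have hz1 : z.1 = p := by
      have hmemf : z.1 ∈ B.filter (· < x) := Finset.mem_filter.mpr ⟨hz'.1, hxz.1⟩
      have hle : z.1 ≤ p := by rw [hp]; exact Finset.le_max' _ z.1 hmemf
      rcases hle.lt_or_eq with hlt | heq
      · exact absurd ⟨hlt, hpB.2.trans hxz.2⟩ (hgz.2 p hpB.1)
      · exact heq
    have hz2 : z.2 = r := by
      have hmemf : z.2 ∈ B.filter (x < ·) := Finset.mem_filter.mpr ⟨hz'.2, hxz.2⟩
      have hle : r ≤ z.2 := by rw [hr]; exact Finset.min'_le _ z.2 hmemf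
      rcases hle.lt_or_eq with hlt | heq
      · exact absurd ⟨hxz.1.trans hrB.2, hlt⟩ (hgz.2 r hrB.1)
      · exact heq.symm
    exact Prod.ext hz1 hz2
  -- rewrite the sum over Fin n as a sum over s2
  have hsum : (∑ i : Fin n, Set.indicator (Set.Icc ((ε.symm i : ℝ × ℝ).1) ((ε.symm i : ℝ × ℝ).2))
      (fun _ => if gap ((ε.symm i : ℝ × ℝ)) then val (ε.symm i : ℝ × ℝ) else 0) x)
      = ∑ z ∈ s2, Set.indicator (Set.Icc z.1 z.2)
          (fun _ => if gap z then val z else 0) x := by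
    rw [← Finset.sum_coe_sort s2 (fun z => Set.indicator (Set.Icc z.1 z.2)
          (fun _ => if gap z then val z else 0) x)]
    exact Equiv.sum_comp ε.symm (fun z : s2 => Set.indicator (Set.Icc (z : ℝ × ℝ).1 (z : ℝ × ℝ).2)
          (fun _ => if gap (z : ℝ × ℝ) then val (z : ℝ × ℝ) else 0) x)
  rw [hsum, Finset.sum_eq_single (p, r)]
  · -- main term
    have hxmem : x ∈ Set.Icc p r := ⟨hpB.2.le, hrB.2.le⟩
    rw [Set.indicator_of_mem hxmem, if_pos hgappr]
    have hne : (S ∩ Set.Ioo p r).Nonempty := ⟨x, ⟨hxIoo, hxB, hxconv⟩, hpB.2, hrB.2⟩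
    rw [hval]
    simp only [dif_pos hne]
    exact (key p r hpB.1 hrB.1 (hpB.2.trans hrB.2) hgappr.2 hne.some hne.some_mem x
      ⟨⟨hxIoo, hxB, hxconv⟩, hpB.2, hrB.2⟩).symm
  · intro z hz hzne
    by_cases hgz : gap z
    · by_cases hxz : x ∈ Set.Icc z.1 z.2
      · have hz' : z.1 ∈ B ∧ z.2 ∈ B := by
          rw [hs2] at hz; exact Finset.mem_product.mp hz
        have hx1 : x ≠ z.1 := fun hh => hxB (hh ▸ hz'.1)
        have hx2 : x ≠ z.2 := fun hh => hxB (hh ▸ hz'.2)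
        have hxIoo' : x ∈ Set.Ioo z.1 z.2 := ⟨hxz.1.lt_of_ne (Ne.symm hx1), hxz.2.lt_of_ne hx2⟩
        exact absurd (huniq z hz hgz hxIoo') hzne
      · rw [Set.indicator_of_notMem hxz]
    · simp [hgz]
  · intro hnmem
    have : (p, r) ∈ s2 := by rw [hs2]; exact Finset.mem_product.mpr ⟨hpB.1, hrB.1⟩
    exact absurd this hnmem

attribute [local instance] Matrix.normedAddCommGroup Matrix.normedSpace

set_option maxHeartbeats 2000000 in
/-- Lemma 7. Let `f₁,…,f_s` be an orthonormal family of step functions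
and `e₁,…,e_m` an orthonormal family orthogonal to all `f_i` such that no nonzero linear
combination of the `e_j` is a step function. Then for every `k ≥ 2` there is a `c > 0`
with `G(𝟙_{[t₁,t₂]},…,𝟙_{[t_{k-1},t_k]}, f₁,…,f_s, e₁,…,e_m) ≥
c·G(𝟙_{[t₁,t₂]},…,𝟙_{[t_{k-1},t_k]}, f₁,…,f_s)` for all `(t₁,…,t_k) ∈ Δ_k`. -/
theorem gram_with_orthocomplement_ge
    {s m : ℕ} (f : Fin s → L2) (hf : Orthonormal ℝ f) (hfstep : ∀ i, IsStepFun (f i))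
    (e : Fin m → L2) (he : Orthonormal ℝ e)
    (hef : ∀ j i, (inner ℝ (e j) (f i) : ℝ) = 0)
    (hnostep : ∀ γ : Fin m → ℝ, γ ≠ 0 → ¬ IsStepFun (∑ j, γ j • e j))
    (k : ℕ) :
    ∃ c : ℝ, 0 < c ∧ ∀ t : Fin (k + 2) → ℝ,
      0 ≤ t 0 → t (Fin.last (k + 1)) ≤ 1 → Monotone t →
      c * gram (Fin.append (fun j : Fin (k + 1) => ind (t j.castSucc) (t j.succ)) f) ≤
        gram (Fin.append
          (Fin.append (fun j : Fin (k + 1) => ind (t j.castSucc) (t j.succ)) f) e) := by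
  classical
  by_contra hcon
  push_neg at hcon
  have h0 : ∀ n : ℕ, ∃ t : Fin (k + 2) → ℝ,
      0 ≤ t 0 ∧ t (Fin.last (k + 1)) ≤ 1 ∧ Monotone t ∧
      gram (Fin.append
          (Fin.append (fun j : Fin (k + 1) => ind (t j.castSucc) (t j.succ)) f) e) <
        (1 / (n + 1 : ℝ)) *
          gram (Fin.append (fun j : Fin (k + 1) => ind (t j.castSucc) (t j.succ)) f) := by
    intro n
    obtain ⟨t, ht0, ht1, htm, hlt⟩ := hcon (1 / (n + 1 : ℝ)) (by positivity)
    exact ⟨t, ht0, ht1, htm, hlt⟩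
  choose t ht0 ht1 htm hlt using h0
  set x : ℕ → Fin (k + 1 + s) → L2 := fun n =>
    Fin.append (fun j : Fin (k + 1) => ind (t n j.castSucc) (t n j.succ)) f with hx
  -- projections
  have hproj : ∀ n, ∃ w : Fin m → L2,
      (∀ j, w j ∈ Submodule.span ℝ (Set.range (x n))) ∧
      gram' (Sum.elim (x n) e) = gram' (x n) * gram' (fun j => e j - w j) ∧
      (∀ j, ‖e j - w j‖ ≤ 1) := by
    intro n
    set K := Submodule.span ℝ (Set.range (x n)) with hK
    haveI : FiniteDimensional ℝ K := FiniteDimensional.span_of_finite ℝ (Set.finite_range _)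
    haveI : CompleteSpace K := FiniteDimensional.complete ℝ K
    haveI : Submodule.HasOrthogonalProjection K := Submodule.HasOrthogonalProjection.ofCompleteSpace K
    refine ⟨fun j => (Submodule.orthogonalProjection K (e j) : L2),
      fun j => (Submodule.orthogonalProjection K (e j)).2, gram'_factor (x n) e, fun j => ?_⟩
    calc ‖e j - (Submodule.orthogonalProjection K (e j) : L2)‖ ≤ ‖e j‖ := norm_sub_orthProj_le _
      _ = 1 := he.1 j
  choose w hwmem hwfact hwnorm using hproj
  set z : ℕ → Fin m → L2 := fun n j => e j - w n j with hz
  -- reindexing the big Gram determinant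
  have hBig : ∀ n, gram (Fin.append (x n) e) = gram' (Sum.elim (x n) e) := by
    intro n
    rw [gram_eq_gram', ← gram'_reindex finSumFinEquiv (Fin.append (x n) e)]
    congr 1
    funext p
    rcases p with i | j
    · simp [Fin.append_left]
    · simp [Fin.append_right]
  -- positivity of small gram and smallness of z-gram
  have hzlt : ∀ n, gram' (z n) < 1 / (n + 1 : ℝ) := by
    intro n
    have hmain := hlt n
    rw [show (Fin.append (Fin.append (fun j : Fin (k + 1) =>
        ind (t n j.castSucc) (t n j.succ)) f) e) = Fin.append (x n) e from rfl,
      hBig n, hwfact n, gram_eq_gram'] at hmain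
    have hxpos : 0 < gram' (x n) := by
      rcases (gram'_nonneg (x n)).lt_or_eq with h | h
      · exact h
      · exfalso
        rw [← h, zero_mul, mul_zero] at hmain
        exact lt_irrefl 0 hmain
    have h2 : gram' (z n) * gram' (x n) < (1 / (n + 1 : ℝ)) * gram' (x n) := by
      calc gram' (z n) * gram' (x n) = gram' (x n) * gram' (fun j => e j - w n j) := by
            rw [mul_comm]
        _ < (1 / (n + 1 : ℝ)) * gram' (x n) := hmain
    exact (mul_lt_mul_iff_left₀ hxpos).mp h2
  -- Bolzano-Weierstrass on Gram matrices of z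
  set Γ : ℕ → Matrix (Fin m) (Fin m) ℝ := fun n => gramM (z n) with hΓ
  have hΓnorm : ∀ n, ‖Γ n‖ ≤ 1 := by
    intro n
    rw [Matrix.norm_le_iff zero_le_one]
    intro i j
    rw [Real.norm_eq_abs]
    calc |(inner ℝ (z n i) (z n j) : ℝ)| ≤ ‖z n i‖ * ‖z n j‖ := abs_real_inner_le_norm _ _
      _ ≤ 1 * 1 := mul_le_mul (hwnorm n i) (hwnorm n j) (norm_nonneg _) zero_le_one
      _ = 1 := mul_one 1
  have hΓmemball : ∀ n, Γ n ∈ Metric.closedBall (0 : Matrix (Fin m) (Fin m) ℝ) 1 := by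
    intro n; rw [Metric.mem_closedBall, dist_zero_right]; exact hΓnorm n
  haveI : ProperSpace (Matrix (Fin m) (Fin m) ℝ) := FiniteDimensional.proper ℝ _
  obtain ⟨Γlim, hΓlim_mem, ψ, hψmono, hψtendsto⟩ :=
    (isCompact_closedBall (0 : Matrix (Fin m) (Fin m) ℝ) 1).tendsto_subseq hΓmemball
  -- determinant of the limit is zero
  have hdet0 : Γlim.det = 0 := by
    have h1 : Filter.Tendsto (fun i => (Γ (ψ i)).det) atTop (𝓝 Γlim.det) :=
      ((Continuous.matrix_det continuous_id).tendsto Γlim).comp hψtendsto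
    have h2 : Filter.Tendsto (fun i => (Γ (ψ i)).det) atTop (𝓝 0) := by
      have hb : ∀ i : ℕ, (Γ (ψ i)).det ≤ 1 / (i + 1 : ℝ) := by
        intro i
        calc (Γ (ψ i)).det = gram' (z (ψ i)) := rfl
          _ ≤ 1 / (ψ i + 1 : ℝ) := (hzlt (ψ i)).le
          _ ≤ 1 / (i + 1 : ℝ) := by
              apply one_div_le_one_div_of_le (by positivity)
              have : (i : ℝ) ≤ (ψ i : ℝ) := Nat.cast_le.mpr hψmono.le_apply
              linarith
      have hb0 : ∀ i : ℕ, 0 ≤ (Γ (ψ i)).det := fun i => gram'_nonneg (z (ψ i))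
      exact squeeze_zero hb0 hb tendsto_one_div_add_atTop_nhds_zero_nat
    exact tendsto_nhds_unique h1 h2
  obtain ⟨γ, hγ0, hγker⟩ := (Matrix.exists_mulVec_eq_zero_iff).mpr hdet0
  -- quadratic form tends to zero
  have hcont : Continuous (fun M : Matrix (Fin m) (Fin m) ℝ => γ ⬝ᵥ M.mulVec γ) := by
    unfold dotProduct Matrix.mulVec
    refine continuous_finset_sum _ fun i _ => Continuous.mul continuous_const ?_
    exact continuous_finset_sum _ fun j _ =>
      Continuous.mul ((continuous_apply j).comp (continuous_apply i)) continuous_const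
  have hquad : Filter.Tendsto (fun i => γ ⬝ᵥ (Γ (ψ i)).mulVec γ) atTop (𝓝 0) := by
    have := (hcont.tendsto Γlim).comp hψtendsto
    rwa [show γ ⬝ᵥ Γlim.mulVec γ = 0 by rw [hγker, dotProduct_zero]] at this
  have hnorm2 : Filter.Tendsto (fun i => ‖∑ j, γ j • z (ψ i) j‖ ^ 2) atTop (𝓝 0) := by
    refine hquad.congr fun i => ?_
    exact gramM_quadform (z (ψ i)) γ
  have hnorm1 : Filter.Tendsto (fun i => ‖∑ j, γ j • z (ψ i) j‖) atTop (𝓝 0) := by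
    have := hnorm2.sqrt
    rw [Real.sqrt_zero] at this
    refine this.congr fun i => ?_
    rw [Real.sqrt_sq (norm_nonneg _)]
  -- the step functions converge to ∑ γ e
  have hsub : ∀ i : ℕ, (∑ j, γ j • e j) - (∑ j, γ j • w (ψ i) j) = ∑ j, γ j • z (ψ i) j := by
    intro i
    rw [← Finset.sum_sub_distrib]
    exact Finset.sum_congr rfl fun j _ => by rw [← smul_sub]
  have htend : Filter.Tendsto (fun i => ∑ j, γ j • w (ψ i) j) atTop (𝓝 (∑ j, γ j • e j)) := by
    rw [tendsto_iff_norm_sub_tendsto_zero]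
    refine hnorm1.congr fun i => ?_
    conv_rhs => rw [norm_sub_rev]
    rw [hsub i]
  -- each approximant is a step function with boundedly many intervals
  choose Nf hNf using hfstep
  set M : ℕ := 1 + ∑ i, Nf i with hM
  have hM1 : 1 ≤ M := Nat.le_add_right 1 _
  have hMi : ∀ i, Nf i ≤ M := fun i =>
    le_trans (Finset.single_le_sum (f := Nf) (fun _ _ => Nat.zero_le _) (Finset.mem_univ i))
      (Nat.le_add_left _ 1)
  have hxstep : ∀ n i, StepAt (x n i) M := by
    intro n i
    refine Fin.addCases (motive := fun i => StepAt (x n i) M) ?_ ?_ i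
    · intro j
      have : x n (Fin.castAdd s j) = ind (t n j.castSucc) (t n j.succ) := by
        rw [hx]; exact Fin.append_left _ _ j
      rw [this]
      exact (stepAt_ind _ _).mono hM1
    · intro j
      have : x n (Fin.natAdd (k + 1) j) = f j := by
        rw [hx]; exact Fin.append_right _ _ j
      rw [this]
      exact StepAt.mono (hNf j) (hMi j)
  have hhstep : ∀ i : ℕ, StepAt (∑ j, γ j • w (ψ i) j) ((k + 1 + s) * M) := by
    intro i
    refine stepAt_of_mem_span (x (ψ i)) M (hxstep (ψ i)) ?_
    exact Submodule.sum_mem _ fun j _ => Submodule.smul_mem _ _ (hwmem (ψ i) j)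
  have : IsStepFun (∑ j, γ j • e j) :=
    isStepFun_of_tendsto ((k + 1 + s) * M) _ _ hhstep htend
  exact hnostep γ hγ0 this
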